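/- Let (G,K) be a symmetric pair of compact type with maximal tori T_K ⊂ T_G as above. Then no root of g with respect to t_G vanishes identically on t_k; equivalently, t_k contains g-regular elements. -/

import Mathlib

open scoped TensorProduct

/-- The complexification `g^ℂ = ℂ ⊗_ℝ g` of a real Lie algebra. -/
abbrev Complexification (g : Type*) [LieRing g] [LieAlgebra ℝ g] := ℂ ⊗[ℝ] g

/-- `α` is a root of `g` with respect to the maximal abelian subalgebra `t_G` (here recorded
as a linear functional on all of `g`, only its values on `t_G` being relevant): `α` is nonzero
on `t_G` and the root space
`g_α = {X ∈ g^ℂ | [W, X] = i·α(W)·X for all W ∈ t_G}` is nonzero. -/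
def IsRootOf {g : Type*} [LieRing g] [LieAlgebra ℝ g]
    (tG : Submodule ℝ g) (α : g →ₗ[ℝ] ℝ) : Prop :=
  (∃ W ∈ tG, α W ≠ 0) ∧
    ∃ X : Complexification g, X ≠ 0 ∧
      ∀ W ∈ tG, ⁅(1 : ℂ) ⊗ₜ[ℝ] W, X⁆ = (Complex.I * (α W : ℂ)) • X

section Aux

variable {g : Type*} [AddCommGroup g] [Module ℝ g]

/-- Projection onto the real part of the complexification. -/
noncomputable def reProj (g : Type*) [AddCommGroup g] [Module ℝ g] :
    ℂ ⊗[ℝ] g →ₗ[ℝ] g :=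
  (TensorProduct.lid ℝ g).toLinearMap ∘ₗ (Complex.reLm.rTensor g)

/-- Projection onto the imaginary part of the complexification. -/
noncomputable def imProj (g : Type*) [AddCommGroup g] [Module ℝ g] :
    ℂ ⊗[ℝ] g →ₗ[ℝ] g :=
  (TensorProduct.lid ℝ g).toLinearMap ∘ₗ (Complex.imLm.rTensor g)

@[simp] lemma reProj_tmul (a : ℂ) (m : g) : reProj g (a ⊗ₜ[ℝ] m) = a.re • m := by
  simp [reProj]

@[simp] lemma imProj_tmul (a : ℂ) (m : g) : imProj g (a ⊗ₜ[ℝ] m) = a.im • m := by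
  simp [imProj]

lemma exists_decomp (X : ℂ ⊗[ℝ] g) :
    ∃ y z : g, X = (1 : ℂ) ⊗ₜ[ℝ] y + Complex.I ⊗ₜ[ℝ] z := by
  induction X using TensorProduct.induction_on with
  | zero => exact ⟨0, 0, by simp⟩
  | tmul a m =>
    refine ⟨a.re • m, a.im • m, ?_⟩
    rw [TensorProduct.tmul_smul, TensorProduct.tmul_smul, TensorProduct.smul_tmul',
      TensorProduct.smul_tmul', ← TensorProduct.add_tmul]
    congr 1
    simp [Complex.real_smul]
  | add x y hx hy =>
    obtain ⟨y1, z1, h1⟩ := hx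
    obtain ⟨y2, z2, h2⟩ := hy
    exact ⟨y1 + y2, z1 + z2, by
      rw [h1, h2, TensorProduct.tmul_add, TensorProduct.tmul_add]; abel⟩

lemma decomp_eq_zero {y z : g}
    (h : (1 : ℂ) ⊗ₜ[ℝ] y + Complex.I ⊗ₜ[ℝ] z = 0) : y = 0 ∧ z = 0 := by
  have h1 := congrArg (reProj g) h
  have h2 := congrArg (imProj g) h
  simp at h1 h2
  exact ⟨h1, h2⟩

lemma lie_add_complexification {g : Type*} [LieRing g] [LieAlgebra ℝ g]
    (x m n : ℂ ⊗[ℝ] g) : ⁅x, m + n⁆ = ⁅x, m⁆ + ⁅x, n⁆ := lie_add x m n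

end Aux

theorem no_root_vanishes_on_tk
    {g : Type*} [LieRing g] [LieAlgebra ℝ g] [Module.Finite ℝ g]
    (hcompact : ∀ x : g, x ≠ 0 → killingForm ℝ g x x < 0)
    (σ : g →ₗ⁅ℝ⁆ g) (hσinv : ∀ x, σ (σ x) = x)
    (tk tG : Submodule ℝ g)
    (htk_fixed : ∀ x ∈ tk, σ x = x)
    (htk_abelian : ∀ x ∈ tk, ∀ y ∈ tk, ⁅x, y⁆ = 0)
    (htk_max : ∀ z : g, σ z = z → (∀ x ∈ tk, ⁅z, x⁆ = 0) → z ∈ tk)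
    (htksub : tk ≤ tG)
    (htG_abelian : ∀ x ∈ tG, ∀ y ∈ tG, ⁅x, y⁆ = 0)
    (htG_max : ∀ z : g, (∀ x ∈ tG, ⁅z, x⁆ = 0) → z ∈ tG)
    (α : g →ₗ[ℝ] ℝ) (hα : IsRootOf tG α) :
    ∃ H ∈ tk, α H ≠ 0 := by
  by_contra hcon
  push_neg at hcon
  obtain ⟨⟨W0, hW0G, hW0α⟩, X, hX0, hXroot⟩ := hα
  -- shorthand : `C y` means `y` centralizes `tk`.
  set C : g → Prop := fun y => ∀ w ∈ tk, ⁅y, w⁆ = 0 with hC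
  -- nonzero has negative Killing square, hence zero Killing square means zero
  have hzero : ∀ c : g, killingForm ℝ g c c = 0 → c = 0 := by
    intro c hc
    by_contra hc0
    exact absurd hc (ne_of_lt (hcompact c hc0))
  -- `σ` preserves the centralizer of `tk`
  have hCσ : ∀ y : g, C y → C (σ y) := by
    intro y hy w hw
    have : ⁅σ y, σ w⁆ = σ ⁅y, w⁆ := (σ.map_lie y w).symm
    rw [htk_fixed w hw] at this
    rw [this, hy w hw, map_zero σ]
  -- key step: two centralizing elements in `p` commute
  have hpp : ∀ y x : g, C y → C x → σ y = -y → σ x = -x → ⁅y, x⁆ = 0 := by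
    intro y x hy hx hσy hσx
    set c := ⁅y, x⁆ with hc
    have hσc : σ c = c := by
      rw [hc, σ.map_lie, hσy, hσx, neg_lie, lie_neg, neg_neg]
    have hCc : C c := by
      intro w hw
      rw [hc, lie_lie, hx w hw, hy w hw, lie_zero, lie_zero, sub_zero]
    have hctk : c ∈ tk := htk_max c hσc hCc
    have : killingForm ℝ g c c = 0 := by
      have h1 : killingForm ℝ g ⁅y, x⁆ c = killingForm ℝ g y ⁅x, c⁆ :=
        LieModule.traceForm_apply_lie_apply ℝ g g y x c
      rw [hx c hctk] at h1
      simpa [← hc] using h1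
    exact hzero c this
  -- centralizer of `tk` is contained in `tG`
  have hcent : ∀ y : g, C y → y ∈ tG := by
    intro y hy
    -- decompose into `k` and `p` parts
    have key : ∀ u : g, C u → ∃ uk up : g, uk ∈ tk ∧ C up ∧ σ up = -up ∧ u = uk + up := by
      intro u hu
      refine ⟨(2⁻¹ : ℝ) • (u + σ u), (2⁻¹ : ℝ) • (u - σ u), ?_, ?_, ?_, ?_⟩
      · refine htk_max _ ?_ ?_
        · rw [map_smul σ, map_add σ, hσinv, add_comm]
        · intro w hw
          rw [smul_lie, add_lie, hu w hw, hCσ u hu w hw, add_zero, smul_zero]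
      · intro w hw
        rw [smul_lie, sub_lie, hu w hw, hCσ u hu w hw, sub_zero, smul_zero]
      · rw [map_smul σ, map_sub σ, hσinv, smul_sub, smul_sub, neg_sub]
      · module
    obtain ⟨yk, yp, hyk, hyp, hσyp, hdecomp⟩ := key y hy
    refine htG_max y ?_
    intro x hxG
    have hxC : C x := fun w hw => htG_abelian x hxG w (htksub hw)
    obtain ⟨xk, xp, hxk, hxp, hσxp, hxdecomp⟩ := key x hxC
    rw [hdecomp, hxdecomp, add_lie, lie_add, lie_add]
    have h1 : ⁅yk, xk⁆ = 0 := htk_abelian yk hyk xk hxk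
    have h2 : ⁅yk, xp⁆ = 0 := by
      rw [← lie_skew, hxp yk hyk, neg_zero]
    have h3 : ⁅yp, xk⁆ = 0 := hyp xk hxk
    have h4 : ⁅yp, xp⁆ = 0 := hpp yp xp hyp hxp hσyp hσxp
    rw [h1, h2, h3, h4]; simp
  -- decompose the root vector
  obtain ⟨Y, Z, hXYZ⟩ := exists_decomp X
  -- the components of the root vector centralize `tk`
  have hbr : ∀ w ∈ tk, ⁅w, Y⁆ = 0 ∧ ⁅w, Z⁆ = 0 := by
    intro w hw
    have h0 := hXroot w (htksub hw)
    rw [hcon w hw, hXYZ] at h0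
    have h0' : (1 : ℂ) ⊗ₜ[ℝ] ⁅w, Y⁆ + Complex.I ⊗ₜ[ℝ] ⁅w, Z⁆ = 0 := by
      have := h0
      rw [lie_add_complexification, LieAlgebra.ExtendScalars.bracket_tmul,
        LieAlgebra.ExtendScalars.bracket_tmul, one_mul, one_mul] at this
      simpa using this
    exact decomp_eq_zero h0'
  have hYG : Y ∈ tG := hcent Y (fun w hw => by
    rw [← lie_skew, (hbr w hw).1, neg_zero])
  have hZG : Z ∈ tG := hcent Z (fun w hw => by
    rw [← lie_skew, (hbr w hw).2, neg_zero])
  -- contradiction at `W0`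
  have hmain := hXroot W0 hW0G
  rw [hXYZ] at hmain
  have hLHS : ⁅(1 : ℂ) ⊗ₜ[ℝ] W0, (1 : ℂ) ⊗ₜ[ℝ] Y + Complex.I ⊗ₜ[ℝ] Z⁆ = 0 := by
    rw [lie_add_complexification, LieAlgebra.ExtendScalars.bracket_tmul,
      LieAlgebra.ExtendScalars.bracket_tmul, one_mul, one_mul,
      htG_abelian W0 hW0G Y hYG, htG_abelian W0 hW0G Z hZG]
    simp
  rw [hLHS] at hmain
  have hXne : (1 : ℂ) ⊗ₜ[ℝ] Y + Complex.I ⊗ₜ[ℝ] Z ≠ 0 := hXYZ ▸ hX0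
  have hsc : (Complex.I * (α W0 : ℂ)) ≠ 0 :=
    mul_ne_zero Complex.I_ne_zero (by exact_mod_cast hW0α)
  rcases smul_eq_zero.mp hmain.symm with h | h
  · exact hsc h
  · exact hXne h
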